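/- Let q^{-1} = y_0y_1 + y_2y_3. For a_0,a_1,a_2,a_3 ∈ ℂ set l = a_0x_0 + a_1x_1 + a_2x_2 + a_3x_3, p_l = a_1y_0 + a_0y_1 + a_3y_2 + a_2y_3 and q_l = (1/2)p_l^2 − (1/3)(a_0a_1+a_2a_3)·q^{-1}. Then q_l(∂)(l^2) = (10/3)·(a_0a_1 + a_2a_3)^2 (as a constant polynomial). In particular q_l(∂)(l^2) = 0 if and only if a_0a_1+a_2a_3 = 0, so the 'inverse quartic' f^{-1} of f = (x_0x_1+x_2x_3)^2, defined on linear forms by l ↦ q_l(∂)(l^2), is a nonzero scalar multiple of the square (y_0y_1+y_2y_3)^2 of the inverse quadric, evaluated at the coefficient vector (a_0,a_1,a_2,a_3). -/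

import Mathlib

open MvPolynomial

set_option maxRecDepth 8000

/-- Iterated partial derivative `∂^α f`: `MvPolynomial.pderiv i` is applied `α i` times
for each variable `i`. -/
noncomputable def pdPow {n : ℕ} (α : Fin n →₀ ℕ) (f : MvPolynomial (Fin n) ℂ) :
    MvPolynomial (Fin n) ℂ :=
  (List.finRange n).foldr (fun i g => (fun h => MvPolynomial.pderiv i h)^[α i] g) f

/-- `g(∂)f`: the polynomial differential operator associated to `g` applied to `f`. -/
noncomputable def apolarAct {n : ℕ} (g f : MvPolynomial (Fin n) ℂ) :
    MvPolynomial (Fin n) ℂ :=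
  ∑ α ∈ g.support, coeff α g • pdPow α f

/-- The inverse quadric `q^{-1} = y_0y_1 + y_2y_3`. -/
noncomputable def qQinv : MvPolynomial (Fin 4) ℂ := X 0 * X 1 + X 2 * X 3

/-- `l = a_0x_0 + a_1x_1 + a_2x_2 + a_3x_3`. -/
noncomputable def lin (a0 a1 a2 a3 : ℂ) : MvPolynomial (Fin 4) ℂ :=
  C a0 * X 0 + C a1 * X 1 + C a2 * X 2 + C a3 * X 3

/-- The polar `p_l = a_1y_0 + a_0y_1 + a_3y_2 + a_2y_3`. -/
noncomputable def polarL (a0 a1 a2 a3 : ℂ) : MvPolynomial (Fin 4) ℂ :=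
  C a1 * X 0 + C a0 * X 1 + C a3 * X 2 + C a2 * X 3

/-- `q_l = (1/2)p_l^2 − (1/3)(a_0a_1 + a_2a_3)·q^{-1}`. -/
noncomputable def qL (a0 a1 a2 a3 : ℂ) : MvPolynomial (Fin 4) ℂ :=
  C (1 / 2 : ℂ) * polarL a0 a1 a2 a3 ^ 2 - C ((a0 * a1 + a2 * a3) / 3) * qQinv

lemma apolarAct_eq_sum {n : ℕ} (g f : MvPolynomial (Fin n) ℂ) (s : Finset (Fin n →₀ ℕ))
    (hs : g.support ⊆ s) : apolarAct g f = ∑ α ∈ s, coeff α g • pdPow α f :=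
  Finset.sum_subset hs (fun α _ h => by rw [notMem_support_iff.mp h, zero_smul])

lemma apolarAct_add {n : ℕ} (g1 g2 f : MvPolynomial (Fin n) ℂ) :
    apolarAct (g1 + g2) f = apolarAct g1 f + apolarAct g2 f := by
  classical
  rw [apolarAct_eq_sum _ _ (g1.support ∪ g2.support) support_add,
    apolarAct_eq_sum g1 _ _ Finset.subset_union_left,
    apolarAct_eq_sum g2 _ _ Finset.subset_union_right, ← Finset.sum_add_distrib]
  simp only [coeff_add, add_smul]

lemma apolarAct_sub {n : ℕ} (g1 g2 f : MvPolynomial (Fin n) ℂ) :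
    apolarAct (g1 - g2) f = apolarAct g1 f - apolarAct g2 f := by
  classical
  rw [apolarAct_eq_sum _ _ (g1.support ∪ g2.support) (support_sub _ g1 g2),
    apolarAct_eq_sum g1 _ _ Finset.subset_union_left,
    apolarAct_eq_sum g2 _ _ Finset.subset_union_right, ← Finset.sum_sub_distrib]
  simp only [coeff_sub, sub_smul]

lemma apolarAct_monomial {n : ℕ} (α : Fin n →₀ ℕ) (c : ℂ) (f : MvPolynomial (Fin n) ℂ) :
    apolarAct (monomial α c) f = c • pdPow α f := by
  rw [apolarAct_eq_sum _ _ {α} support_monomial_subset, Finset.sum_singleton, coeff_monomial,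
    if_pos rfl]

lemma apolarAct_CXX (c : ℂ) (i j : Fin 4) (f : MvPolynomial (Fin 4) ℂ) :
    apolarAct (C c * (X i * X j)) f
      = c • pdPow (Finsupp.single i 1 + Finsupp.single j 1) f := by
  rw [show (C c * (X i * X j) : MvPolynomial (Fin 4) ℂ)
      = monomial (Finsupp.single i 1 + Finsupp.single j 1) c by
    rw [X, X, monomial_mul, C_mul_monomial, one_mul, mul_one]]
  exact apolarAct_monomial _ _ _

lemma pdPow_pair (i j : Fin 4) (hij : i ≤ j) (f : MvPolynomial (Fin 4) ℂ) :
    pdPow (Finsupp.single i 1 + Finsupp.single j 1) f = pderiv i (pderiv j f) := by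
  have hr : List.finRange 4 = [0, 1, 2, 3] := rfl
  fin_cases i <;> fin_cases j <;>
    first
      | exact absurd hij (by decide)
      | simp only [pdPow, hr, List.foldr, Finsupp.add_apply, Finsupp.single_apply]
        norm_num [Fin.ext_iff, Function.iterate_succ_apply']
  all_goals rfl

lemma pderiv_lin (a0 a1 a2 a3 : ℂ) (k : Fin 4) :
    pderiv k (lin a0 a1 a2 a3) = C (![a0, a1, a2, a3] k) := by
  fin_cases k <;>
    simp (config := { decide := true }) [lin, pderiv_X, Pi.single_apply]

lemma pderiv2_lin_sq (a0 a1 a2 a3 : ℂ) (i j : Fin 4) :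
    pderiv i (pderiv j (lin a0 a1 a2 a3 ^ 2))
      = C (2 * ![a0, a1, a2, a3] i * ![a0, a1, a2, a3] j) := by
  simp only [pow_two, pderiv_mul, pderiv_lin, pderiv_C, map_add, zero_mul, mul_zero,
    zero_add, add_zero]
  simp only [← C_mul, ← C_add]
  exact congrArg C (by ring)

/-- `q_l(∂)(l^2) = (10/3)(a_0a_1 + a_2a_3)^2`, so `q_l(∂)(l^2) = 0` iff
`a_0a_1 + a_2a_3 = 0`: the inverse quartic of `(x_0x_1+x_2x_3)^2` is a nonzero scalar
multiple of `(y_0y_1+y_2y_3)^2` evaluated at the coefficient vector. -/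
theorem statement12 (a0 a1 a2 a3 : ℂ) :
    apolarAct (qL a0 a1 a2 a3) (lin a0 a1 a2 a3 ^ 2)
      = C ((10 / 3 : ℂ) * (a0 * a1 + a2 * a3) ^ 2) ∧
    (apolarAct (qL a0 a1 a2 a3) (lin a0 a1 a2 a3 ^ 2) = 0 ↔ a0 * a1 + a2 * a3 = 0) := by
  have hq : qL a0 a1 a2 a3
      = C (1/2*(a1*a1)) * (X 0*X 0) + C (1/2*(a0*a0)) * (X 1*X 1)
      + C (1/2*(a3*a3)) * (X 2*X 2) + C (1/2*(a2*a2)) * (X 3*X 3)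
      + C (1/2*(2*(a1*a0))) * (X 0*X 1) + C (1/2*(2*(a1*a3))) * (X 0*X 2) + C (1/2*(2*(a1*a2))) * (X 0*X 3)
      + C (1/2*(2*(a0*a3))) * (X 1*X 2) + C (1/2*(2*(a0*a2))) * (X 1*X 3) + C (1/2*(2*(a3*a2))) * (X 2*X 3)
      - C ((a0*a1+a2*a3)/3) * (X 0*X 1) - C ((a0*a1+a2*a3)/3) * (X 2*X 3) := by
    simp only [qL, polarL, qQinv, C_mul, map_ofNat]
    ring
  have key : apolarAct (qL a0 a1 a2 a3) (lin a0 a1 a2 a3 ^ 2)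
      = C ((10 / 3 : ℂ) * (a0 * a1 + a2 * a3) ^ 2) := by
    rw [hq]
    simp only [apolarAct_add, apolarAct_sub, apolarAct_CXX]
    rw [pdPow_pair 0 0 (by decide), pdPow_pair 1 1 (by decide), pdPow_pair 2 2 (by decide),
      pdPow_pair 3 3 (by decide), pdPow_pair 0 1 (by decide), pdPow_pair 0 2 (by decide),
      pdPow_pair 0 3 (by decide), pdPow_pair 1 2 (by decide), pdPow_pair 1 3 (by decide),
      pdPow_pair 2 3 (by decide)]
    simp only [pderiv2_lin_sq]
    simp only [Matrix.cons_val_zero, Matrix.cons_val_one, Matrix.head_cons,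
      Matrix.cons_val_two, Matrix.tail_cons, Matrix.cons_val_three]
    simp only [smul_eq_C_mul, ← C_mul, ← C_add, ← C_sub]
    rw [C_inj]
    ring
  refine ⟨key, ?_⟩
  rw [key, show (0 : MvPolynomial (Fin 4) ℂ) = C 0 from (map_zero C).symm, C_inj]
  constructor
  · intro h
    have h10 : (10 / 3 : ℂ) ≠ 0 := by norm_num
    have := (mul_eq_zero.mp h).resolve_left h10
    exact pow_eq_zero_iff (by norm_num) |>.mp this
  · intro h; rw [h]; ring
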